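/- Conversion from ADP to approximate differential privacy: if a mechanism M satisfies (α, ε)-ADP, then for any δ ∈ (0,1) it satisfies (ε̄, δ)-differential privacy for any ε̄ ≥ log((e^ε·α(α−1) + 1)/δ) / (α−1). In particular, if E_P[(dP/dQ)^{α−1}] ≤ α(α−1)ε + 1 then P(dP/dQ > e^{ε̄}) ≤ (α(α−1)ε + 1)·e^{−ε̄(α−1)}. -/

import Mathlib

open MeasureTheory
open scoped ENNReal

/-- Conversion from ADP to approximate differential privacy. Let `P ≪ Q` be the
output laws of an `(α, ε)`-ADP mechanism on adjacent datasets, i.e.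
`∫ (dP/dQ)^α dQ = E_P[(dP/dQ)^{α−1}] ≤ α(α−1)ε + 1`. Then for any `δ ∈ (0,1)` and any
`ε̄ ≥ log((e^ε·α(α−1) + 1)/δ)/(α−1)`, the mechanism is `(ε̄, δ)`-DP:
`P(S) ≤ e^{ε̄} Q(S) + δ` for all measurable `S`; in particular (Markov)
`P(dP/dQ > e^{ε̄}) ≤ (α(α−1)ε + 1)·e^{−ε̄(α−1)}`. -/
theorem ADP_to_approxDP
    {X : Type*} [MeasurableSpace X] (P Q : Measure X)
    [IsProbabilityMeasure P] [IsProbabilityMeasure Q]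
    (hPQ : P ≪ Q)
    (α ε δ εbar : ℝ) (hα : 1 < α) (hε : 0 ≤ ε) (hδ : δ ∈ Set.Ioo (0 : ℝ) 1)
    (hADP : ∫⁻ x, (P.rnDeriv Q x) ^ α ∂Q ≤ ENNReal.ofReal (α * (α - 1) * ε + 1))
    (hεbar : Real.log ((Real.exp ε * (α * (α - 1)) + 1) / δ) / (α - 1) ≤ εbar) :
    (∀ S : Set X, MeasurableSet S →
        P S ≤ ENNReal.ofReal (Real.exp εbar) * Q S + ENNReal.ofReal δ) ∧
      P {x | Real.exp εbar < (P.rnDeriv Q x).toReal}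
        ≤ ENNReal.ofReal ((α * (α - 1) * ε + 1) * Real.exp (-(εbar * (α - 1)))) := by
  obtain ⟨hδ0, hδ1⟩ := hδ
  have hα1 : (0:ℝ) < α - 1 := by linarith
  set f := P.rnDeriv Q with hfdef
  have hf_meas : Measurable f := P.measurable_rnDeriv Q
  set t : ℝ := εbar * (α - 1) with ht
  set K : ℝ := α * (α - 1) * ε + 1 with hKdef
  have hK0 : 0 < K := by rw [hKdef]; nlinarith [mul_nonneg (mul_nonneg (by linarith : (0:ℝ) ≤ α) (by linarith : (0:ℝ) ≤ α - 1)) hε]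
  set c : ℝ≥0∞ := ENNReal.ofReal (Real.exp εbar) with hc
  have hc0 : c ≠ 0 := ne_of_gt (ENNReal.ofReal_pos.mpr (Real.exp_pos _))
  have hcne : c ≠ ∞ := ENNReal.ofReal_ne_top
  set A : Set X := {x | Real.exp εbar < (f x).toReal} with hA
  have hA_meas : MeasurableSet A :=
    measurableSet_lt measurable_const hf_meas.ennreal_toReal
  -- c^(α-1) = ofReal (exp t)
  have hcpow : c ^ (α - 1) = ENNReal.ofReal (Real.exp t) := by
    rw [hc, ENNReal.ofReal_rpow_of_pos (Real.exp_pos _), ← Real.exp_mul, ht]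
  -- Markov: c^(α-1) * P A ≤ ∫ f^α dQ
  have hPA_int : P A = ∫⁻ x in A, f x ∂Q := (Measure.setLIntegral_rnDeriv hPQ A).symm
  have hmarkov : c ^ (α - 1) * P A ≤ ENNReal.ofReal K := by
    calc c ^ (α - 1) * P A = ∫⁻ x in A, c ^ (α - 1) * f x ∂Q := by
          rw [hPA_int, lintegral_const_mul _ hf_meas]
      _ ≤ ∫⁻ x in A, f x ^ α ∂Q := by
          refine setLIntegral_mono' hA_meas fun x hx => ?_
          have hx' : Real.exp εbar < (f x).toReal := hx
          have hfx_ne : f x ≠ ∞ := by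
            intro h
            rw [h] at hx'
            simp at hx'
            exact absurd hx' (not_lt.mpr (le_of_lt (Real.exp_pos _)))
          have hcf : c ≤ f x := by
            rw [hc, ← ENNReal.ofReal_toReal hfx_ne]
            exact ENNReal.ofReal_le_ofReal (le_of_lt hx')
          have hfx0 : f x ≠ 0 := by
            intro h; rw [h] at hcf; exact hc0 (le_antisymm hcf zero_le)
          calc c ^ (α - 1) * f x ≤ f x ^ (α - 1) * f x :=
                mul_le_mul_left (ENNReal.rpow_le_rpow hcf (le_of_lt hα1)) _
            _ = f x ^ α := by
                nth_rewrite 2 [← ENNReal.rpow_one (f x)]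
                rw [← ENNReal.rpow_add _ _ hfx0 hfx_ne]
                norm_num
      _ ≤ ∫⁻ x, f x ^ α ∂Q := setLIntegral_le_lintegral _ _
      _ ≤ ENNReal.ofReal K := hADP
  have hPA : P A ≤ ENNReal.ofReal (K * Real.exp (-t)) := by
    have h1 : P A ≤ ENNReal.ofReal K / c ^ (α - 1) := by
      rw [ENNReal.le_div_iff_mul_le (Or.inl (by rw [hcpow]; simp [Real.exp_pos]))
        (Or.inl (by rw [hcpow]; exact ENNReal.ofReal_ne_top))]
      rwa [mul_comm]
    refine h1.trans_eq ?_
    rw [hcpow, ← ENNReal.ofReal_div_of_pos (Real.exp_pos _)]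
    congr 1
    rw [Real.exp_neg]
    field_simp
  refine ⟨?_, hPA⟩
  -- P A ≤ δ
  have hKδ : K * Real.exp (-t) ≤ δ := by
    set M : ℝ := Real.exp ε * (α * (α - 1)) + 1 with hM
    have hM0 : 0 < M := by rw [hM]; nlinarith [mul_nonneg (Real.exp_pos ε).le (mul_nonneg (by linarith : (0:ℝ) ≤ α) (by linarith : (0:ℝ) ≤ α - 1))]
    have hKM : K ≤ M := by
      rw [hKdef, hM]
      have h1 := Real.add_one_le_exp ε
      nlinarith [mul_nonneg (by linarith : (0:ℝ) ≤ α) (by linarith : (0:ℝ) ≤ α - 1)]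
    have hlog : Real.log (M / δ) ≤ t := by
      rw [ht]
      calc Real.log (M / δ) = Real.log (M / δ) / (α - 1) * (α - 1) := by field_simp
        _ ≤ εbar * (α - 1) := by
            apply mul_le_mul_of_nonneg_right hεbar (le_of_lt hα1)
    have hexp : M / δ ≤ Real.exp t := by
      calc M / δ = Real.exp (Real.log (M / δ)) := by
            rw [Real.exp_log (by positivity)]
        _ ≤ Real.exp t := Real.exp_le_exp.mpr hlog
    have hexpneg : Real.exp (-t) ≤ δ / M := by
      rw [Real.exp_neg, inv_le_comm₀ (Real.exp_pos _) (by positivity), inv_div]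
      exact hexp
    calc K * Real.exp (-t) ≤ M * (δ / M) := by
          apply mul_le_mul hKM hexpneg (le_of_lt (Real.exp_pos _)) (le_of_lt hM0)
      _ = δ := by field_simp
  have hPAδ : P A ≤ ENNReal.ofReal δ := hPA.trans (ENNReal.ofReal_le_ofReal hKδ)
  intro S hS
  have hsplit : P S ≤ P (S \ A) + P (S ∩ A) := by
    rw [← measure_diff_add_inter S hA_meas]
  have h2 : P (S ∩ A) ≤ ENNReal.ofReal δ := (measure_mono Set.inter_subset_right).trans hPAδ
  have h1 : P (S \ A) ≤ c * Q S := by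
    rw [(Measure.setLIntegral_rnDeriv hPQ (S \ A)).symm]
    calc ∫⁻ x in S \ A, f x ∂Q ≤ ∫⁻ _ in S \ A, c ∂Q := by
          refine lintegral_mono_ae ?_
          have hlt := Measure.rnDeriv_lt_top P Q
          have h3 : ∀ᵐ x ∂Q.restrict (S \ A), f x < ∞ := ae_restrict_of_ae hlt
          have h4 : ∀ᵐ x ∂Q.restrict (S \ A), x ∈ S \ A := ae_restrict_mem (hS.diff hA_meas)
          filter_upwards [h3, h4] with x hx hxA
          have : ¬ Real.exp εbar < (f x).toReal := hxA.2
          rw [hc, ← ENNReal.ofReal_toReal hx.ne]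
          exact ENNReal.ofReal_le_ofReal (not_lt.mp this)
      _ = c * Q (S \ A) := setLIntegral_const _ _
      _ ≤ c * Q S := mul_le_mul_right (measure_mono Set.diff_subset) _
  calc P S ≤ P (S \ A) + P (S ∩ A) := hsplit
    _ ≤ c * Q S + ENNReal.ofReal δ := add_le_add h1 h2
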